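/- arXiv:1511.04505 — 2 statements merged into one kernel-verified Lean document; each statement's English description precedes it below -/
import Mathlib

section
/- Let Δx > 0 and x_j ∈ ℝ, and set x_{j±1} = x_j ± Δx. Write I_{j+l} = (x_{j+l} − Δx/2, x_{j+l} + Δx/2) for l = −1, 0, 1. Then for any real numbers ū_{j-1}, ū_j, ū_{j+1}, v̄_{j-1}, v̄_j, v̄_{j+1} there exists a unique real polynomial Q of degree at most 5 satisfying the six conditions: (1/Δx)·∫_{I_{j+l}} Q(x) dx = ū_{j+l} and (1/Δx)·∫_{I_{j+l}} Q(x)·(x − x_{j+l})/Δx dx = v̄_{j+l} for l = −1, 0, 1. -/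
open MeasureTheory intervalIntegral Polynomial

lemma hwq_sum_int (n : ℕ) (c : ℕ → ℝ) (a b : ℝ) :
    ∫ t in a..b, (∑ i ∈ Finset.range n, c i * t ^ i)
      = ∑ i ∈ Finset.range n, c i * ((b ^ (i+1) - a ^ (i+1)) / (i+1)) := by
  rw [intervalIntegral.integral_finset_sum (fun i _ => by
    exact (Continuous.intervalIntegrable (by continuity) a b))]
  exact Finset.sum_congr rfl fun i _ => by
    rw [intervalIntegral.integral_const_mul, integral_pow]

lemma hwq_poly_int (d0 d1 d2 d3 d4 d5 d6 a b : ℝ) :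
    ∫ t in a..b, (d0 + d1*t + d2*t^2 + d3*t^3 + d4*t^4 + d5*t^5 + d6*t^6)
      = (d0*b + d1*b^2/2 + d2*b^3/3 + d3*b^4/4 + d4*b^5/5 + d5*b^6/6 + d6*b^7/7)
        - (d0*a + d1*a^2/2 + d2*a^3/3 + d3*a^4/4 + d4*a^5/5 + d5*a^6/6 + d6*a^7/7) := by
  have h : (fun t : ℝ => d0 + d1*t + d2*t^2 + d3*t^3 + d4*t^4 + d5*t^5 + d6*t^6)
      = fun t : ℝ => ∑ i ∈ Finset.range 7, [d0,d1,d2,d3,d4,d5,d6].getD i 0 * t ^ i := by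
    funext t
    norm_num [Finset.sum_range_succ]
    try ring
  rw [show (∫ t in a..b, (d0 + d1*t + d2*t^2 + d3*t^3 + d4*t^4 + d5*t^5 + d6*t^6))
      = ∫ t in a..b, (∑ i ∈ Finset.range 7, [d0,d1,d2,d3,d4,d5,d6].getD i 0 * t ^ i) from by
        rw [← h],
    hwq_sum_int]
  norm_num [Finset.sum_range_succ]
  try ring

lemma hwq_change (Δx xj : ℝ) (hΔx : 0 < Δx) (f : ℝ → ℝ) (l : ℤ) :
    (1 / Δx) * ∫ x in Set.Ioo (xj + l * Δx - Δx / 2) (xj + l * Δx + Δx / 2), f x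
      = ∫ t in ((l:ℝ)-1/2)..((l:ℝ)+1/2), f (Δx * t + xj) := by
  rw [intervalIntegral.integral_comp_mul_add f hΔx.ne' xj]
  have e1 : Δx * ((l:ℝ)-1/2) + xj = xj + l * Δx - Δx / 2 := by ring
  have e2 : Δx * ((l:ℝ)+1/2) + xj = xj + l * Δx + Δx / 2 := by ring
  rw [e1, e2, intervalIntegral.integral_of_le (by linarith), integral_Ioc_eq_integral_Ioo,
    smul_eq_mul, one_div]

lemma hwq_exists_aux (c0 c1 c2 c3 c4 c5 : ℝ) :
    ∃ P : Polynomial ℝ, P.degree ≤ 5 ∧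
      ∀ t : ℝ, P.eval t = c0 + c1*t + c2*t^2 + c3*t^3 + c4*t^4 + c5*t^5 := by
  refine ⟨Polynomial.C c0 + Polynomial.C c1 * Polynomial.X + Polynomial.C c2 * Polynomial.X^2
    + Polynomial.C c3 * Polynomial.X^3 + Polynomial.C c4 * Polynomial.X^4
    + Polynomial.C c5 * Polynomial.X^5, ?_, ?_⟩
  · compute_degree
  · intro t
    simp

lemma hwq_exists (u v : ℤ → ℝ) :
    ∃ P : Polynomial ℝ, P.degree ≤ 5 ∧ ∀ l : ℤ, l = -1 ∨ l = 0 ∨ l = 1 →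
      ((∫ t in ((l:ℝ)-1/2)..((l:ℝ)+1/2), P.eval t) = u l ∧
       (∫ t in ((l:ℝ)-1/2)..((l:ℝ)+1/2), P.eval t * (t - (l:ℝ))) = v l) := by
  obtain ⟨P, hdeg, hev⟩ := hwq_exists_aux ((-43/384) * u (-1) + (-27/64) * v (-1) + (235/192) * u 0 + (-43/384) * u 1 + (27/64) * v 1) ((167/576) * u (-1) + (281/288) * v (-1) + (2449/144) * v 0 + (-167/576) * u 1 + (281/288) * v 1) ((23/16) * u (-1) + (45/8) * v (-1) + (-23/8) * u 0 + (23/16) * u 1 + (-45/8) * v 1) ((-455/216) * u (-1) + (-785/108) * v (-1) + (-1945/54) * v 0 + (455/216) * u 1 + (-785/108) * v 1) ((-5/8) * u (-1) + (-15/4) * v (-1) + (5/4) * u 0 + (-5/8) * u 1 + (15/4) * v 1) ((35/36) * u (-1) + (77/18) * v (-1) + (133/9) * v 0 + (-35/36) * u 1 + (77/18) * v 1)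
  refine ⟨P, hdeg, ?_⟩
  intro l hl
  rcases hl with hl | hl | hl
  · subst hl
    constructor
    · calc (∫ t in (((-1:ℤ):ℝ)-1/2)..(((-1:ℤ):ℝ)+1/2), P.eval t)
          = ∫ t in (((-1:ℤ):ℝ)-1/2)..(((-1:ℤ):ℝ)+1/2), (((-43/384) * u (-1) + (-27/64) * v (-1) + (235/192) * u 0 + (-43/384) * u 1 + (27/64) * v 1) + ((167/576) * u (-1) + (281/288) * v (-1) + (2449/144) * v 0 + (-167/576) * u 1 + (281/288) * v 1)*t + ((23/16) * u (-1) + (45/8) * v (-1) + (-23/8) * u 0 + (23/16) * u 1 + (-45/8) * v 1)*t^2 + ((-455/216) * u (-1) + (-785/108) * v (-1) + (-1945/54) * v 0 + (455/216) * u 1 + (-785/108) * v 1)*t^3 + ((-5/8) * u (-1) + (-15/4) * v (-1) + (5/4) * u 0 + (-5/8) * u 1 + (15/4) * v 1)*t^4 + ((35/36) * u (-1) + (77/18) * v (-1) + (133/9) * v 0 + (-35/36) * u 1 + (77/18) * v 1)*t^5 + 0*t^6) := by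
            apply intervalIntegral.integral_congr
            intro t _
            simp only [hev]
            push_cast
            try ring
        _ = u (-1) := by rw [hwq_poly_int]; push_cast; ring
    · calc (∫ t in (((-1:ℤ):ℝ)-1/2)..(((-1:ℤ):ℝ)+1/2), P.eval t * (t - ((-1:ℤ):ℝ)))
          = ∫ t in (((-1:ℤ):ℝ)-1/2)..(((-1:ℤ):ℝ)+1/2), ((((-43/384) * u (-1) + (-27/64) * v (-1) + (235/192) * u 0 + (-43/384) * u 1 + (27/64) * v 1)) + (((-43/384) * u (-1) + (-27/64) * v (-1) + (235/192) * u 0 + (-43/384) * u 1 + (27/64) * v 1) + ((167/576) * u (-1) + (281/288) * v (-1) + (2449/144) * v 0 + (-167/576) * u 1 + (281/288) * v 1))*t + (((167/576) * u (-1) + (281/288) * v (-1) + (2449/144) * v 0 + (-167/576) * u 1 + (281/288) * v 1) + ((23/16) * u (-1) + (45/8) * v (-1) + (-23/8) * u 0 + (23/16) * u 1 + (-45/8) * v 1))*t^2 + (((23/16) * u (-1) + (45/8) * v (-1) + (-23/8) * u 0 + (23/16) * u 1 + (-45/8) * v 1) + ((-455/216) * u (-1) + (-785/108) * v (-1) +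 (-1945/54) * v 0 + (455/216) * u 1 + (-785/108) * v 1))*t^3 + (((-455/216) * u (-1) + (-785/108) * v (-1) + (-1945/54) * v 0 + (455/216) * u 1 + (-785/108) * v 1) + ((-5/8) * u (-1) + (-15/4) * v (-1) + (5/4) * u 0 + (-5/8) * u 1 + (15/4) * v 1))*t^4 + (((-5/8) * u (-1) + (-15/4) * v (-1) + (5/4) * u 0 + (-5/8) * u 1 + (15/4) * v 1) + ((35/36) * u (-1) + (77/18) * v (-1) + (133/9) * v 0 + (-35/36) * u 1 + (77/18) * v 1))*t^5 + (((35/36) * u (-1) + (77/18) * v (-1) + (133/9) * v 0 + (-35/36) * u 1 + (77/18) * v 1))*t^6) := by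
            apply intervalIntegral.integral_congr
            intro t _
            simp only [hev]
            push_cast
            try ring
        _ = v (-1) := by rw [hwq_poly_int]; push_cast; ring
  · subst hl
    constructor
    · calc (∫ t in (((0:ℤ):ℝ)-1/2)..(((0:ℤ):ℝ)+1/2), P.eval t)
          = ∫ t in (((0:ℤ):ℝ)-1/2)..(((0:ℤ):ℝ)+1/2), (((-43/384) * u (-1) + (-27/64) * v (-1) + (235/192) * u 0 + (-43/384) * u 1 + (27/64) * v 1) + ((167/576) * u (-1) + (281/288) * v (-1) + (2449/144) * v 0 + (-167/576) * u 1 + (281/288) * v 1)*t + ((23/16) * u (-1) + (45/8) * v (-1) + (-23/8) * u 0 + (23/16) * u 1 + (-45/8) * v 1)*t^2 + ((-455/216) * u (-1) + (-785/108) * v (-1) + (-1945/54) * v 0 + (455/216) * u 1 + (-785/108) * v 1)*t^3 + ((-5/8) * u (-1) + (-15/4) * v (-1) + (5/4) * u 0 + (-5/8) * u 1 + (15/4) * v 1)*t^4 + ((35/36) * u (-1) + (77/18) * v (-1) + (133/9) * v 0 + (-35/36) * u 1 + (77/18) * v 1)*t^5 + 0*t^6) := by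
            apply intervalIntegral.integral_congr
            intro t _
            simp only [hev]
            push_cast
            try ring
        _ = u (0) := by rw [hwq_poly_int]; push_cast; ring
    · calc (∫ t in (((0:ℤ):ℝ)-1/2)..(((0:ℤ):ℝ)+1/2), P.eval t * (t - ((0:ℤ):ℝ)))
          = ∫ t in (((0:ℤ):ℝ)-1/2)..(((0:ℤ):ℝ)+1/2), (0 + ((-43/384) * u (-1) + (-27/64) * v (-1) + (235/192) * u 0 + (-43/384) * u 1 + (27/64) * v 1)*t + ((167/576) * u (-1) + (281/288) * v (-1) + (2449/144) * v 0 + (-167/576) * u 1 + (281/288) * v 1)*t^2 + ((23/16) * u (-1) + (45/8) * v (-1) + (-23/8) * u 0 + (23/16) * u 1 + (-45/8) * v 1)*t^3 + ((-455/216) * u (-1) + (-785/108) * v (-1) + (-1945/54) * v 0 + (455/216) * u 1 + (-785/108) * v 1)*t^4 + ((-5/8) * u (-1) + (-15/4) * v (-1) + (5/4) * u 0 + (-5/8) * u 1 + (15/4) * v 1)*t^5 + ((35/36) * u (-1) + (77/18) * v (-1) + (133/9) * v 0 + (-35/36) * u 1 + (77/18) * v 1)*t^6) := by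
            apply intervalIntegral.integral_congr
            intro t _
            simp only [hev]
            push_cast
            try ring
        _ = v (0) := by rw [hwq_poly_int]; push_cast; ring
  · subst hl
    constructor
    · calc (∫ t in (((1:ℤ):ℝ)-1/2)..(((1:ℤ):ℝ)+1/2), P.eval t)
          = ∫ t in (((1:ℤ):ℝ)-1/2)..(((1:ℤ):ℝ)+1/2), (((-43/384) * u (-1) + (-27/64) * v (-1) + (235/192) * u 0 + (-43/384) * u 1 + (27/64) * v 1) + ((167/576) * u (-1) + (281/288) * v (-1) + (2449/144) * v 0 + (-167/576) * u 1 + (281/288) * v 1)*t + ((23/16) * u (-1) + (45/8) * v (-1) + (-23/8) * u 0 + (23/16) * u 1 + (-45/8) * v 1)*t^2 + ((-455/216) * u (-1) + (-785/108) * v (-1) + (-1945/54) * v 0 + (455/216) * u 1 + (-785/108) * v 1)*t^3 + ((-5/8) * u (-1) + (-15/4) * v (-1) + (5/4) * u 0 + (-5/8) * u 1 + (15/4) * v 1)*t^4 + ((35/36) * u (-1) + (77/18) * v (-1) + (133/9) * v 0 + (-35/36) * u 1 + (77/18) * v 1)*t^5 + 0*t^6) := by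
            apply intervalIntegral.integral_congr
            intro t _
            simp only [hev]
            push_cast
            try ring
        _ = u (1) := by rw [hwq_poly_int]; push_cast; ring
    · calc (∫ t in (((1:ℤ):ℝ)-1/2)..(((1:ℤ):ℝ)+1/2), P.eval t * (t - ((1:ℤ):ℝ)))
          = ∫ t in (((1:ℤ):ℝ)-1/2)..(((1:ℤ):ℝ)+1/2), ((-((-43/384) * u (-1) + (-27/64) * v (-1) + (235/192) * u 0 + (-43/384) * u 1 + (27/64) * v 1)) + (((-43/384) * u (-1) + (-27/64) * v (-1) + (235/192) * u 0 + (-43/384) * u 1 + (27/64) * v 1) - ((167/576) * u (-1) + (281/288) * v (-1) + (2449/144) * v 0 + (-167/576) * u 1 + (281/288) * v 1))*t + (((167/576) * u (-1) + (281/288) * v (-1) + (2449/144) * v 0 + (-167/576) * u 1 + (281/288) * v 1) - ((23/16) * u (-1) + (45/8) * v (-1) + (-23/8) * u 0 + (23/16) * u 1 + (-45/8) * v 1))*t^2 + (((23/16) * u (-1) + (45/8) * v (-1) + (-23/8) * u 0 + (23/16) * u 1 + (-45/8) * v 1) - ((-455/216) * u (-1) + (-785/108) * v (-1) + (-1945/54)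 * v 0 + (455/216) * u 1 + (-785/108) * v 1))*t^3 + (((-455/216) * u (-1) + (-785/108) * v (-1) + (-1945/54) * v 0 + (455/216) * u 1 + (-785/108) * v 1) - ((-5/8) * u (-1) + (-15/4) * v (-1) + (5/4) * u 0 + (-5/8) * u 1 + (15/4) * v 1))*t^4 + (((-5/8) * u (-1) + (-15/4) * v (-1) + (5/4) * u 0 + (-5/8) * u 1 + (15/4) * v 1) - ((35/36) * u (-1) + (77/18) * v (-1) + (133/9) * v 0 + (-35/36) * u 1 + (77/18) * v 1))*t^5 + (((35/36) * u (-1) + (77/18) * v (-1) + (133/9) * v 0 + (-35/36) * u 1 + (77/18) * v 1))*t^6) := by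
            apply intervalIntegral.integral_congr
            intro t _
            simp only [hev]
            push_cast
            try ring
        _ = v (1) := by rw [hwq_poly_int]; push_cast; ring

lemma hwq_zero (P : Polynomial ℝ) (hdeg : P.degree ≤ 5)
    (hum : (∫ t in (((-1:ℤ):ℝ)-1/2)..(((-1:ℤ):ℝ)+1/2), P.eval t) = 0)
    (hvm : (∫ t in (((-1:ℤ):ℝ)-1/2)..(((-1:ℤ):ℝ)+1/2), P.eval t * (t - ((-1:ℤ):ℝ))) = 0)
    (hu0 : (∫ t in (((0:ℤ):ℝ)-1/2)..(((0:ℤ):ℝ)+1/2), P.eval t) = 0)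
    (hv0 : (∫ t in (((0:ℤ):ℝ)-1/2)..(((0:ℤ):ℝ)+1/2), P.eval t * (t - ((0:ℤ):ℝ))) = 0)
    (hup : (∫ t in (((1:ℤ):ℝ)-1/2)..(((1:ℤ):ℝ)+1/2), P.eval t) = 0)
    (hvp : (∫ t in (((1:ℤ):ℝ)-1/2)..(((1:ℤ):ℝ)+1/2), P.eval t * (t - ((1:ℤ):ℝ))) = 0)
    : P = 0 := by
  have hnat : P.natDegree ≤ 5 := Polynomial.natDegree_le_iff_degree_le.mpr hdeg
  have hnd : P.natDegree < 6 := by omega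
  set d0 := P.coeff 0 with hd0
  set d1 := P.coeff 1 with hd1
  set d2 := P.coeff 2 with hd2
  set d3 := P.coeff 3 with hd3
  set d4 := P.coeff 4 with hd4
  set d5 := P.coeff 5 with hd5
  have he : ∀ t : ℝ, P.eval t = d0 + d1*t + d2*t^2 + d3*t^3 + d4*t^4 + d5*t^5 := by
    intro t
    rw [Polynomial.eval_eq_sum_range' hnd]
    norm_num [Finset.sum_range_succ]
    try ring
  have Ehum : (∫ t in (((-1:ℤ):ℝ)-1/2)..(((-1:ℤ):ℝ)+1/2), (d0 + d1*t + d2*t^2 + d3*t^3 + d4*t^4 + d5*t^5 + 0*t^6)) = 0 := by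
    refine Eq.trans (intervalIntegral.integral_congr fun t _ => ?_) hum
    simp only [he]
    push_cast
    try ring
  have Ehvm : (∫ t in (((-1:ℤ):ℝ)-1/2)..(((-1:ℤ):ℝ)+1/2), ((d0) + (d0 + d1)*t + (d1 + d2)*t^2 + (d2 + d3)*t^3 + (d3 + d4)*t^4 + (d4 + d5)*t^5 + (d5)*t^6)) = 0 := by
    refine Eq.trans (intervalIntegral.integral_congr fun t _ => ?_) hvm
    simp only [he]
    push_cast
    try ring
  have Ehu0 : (∫ t in (((0:ℤ):ℝ)-1/2)..(((0:ℤ):ℝ)+1/2), (d0 + d1*t + d2*t^2 + d3*t^3 + d4*t^4 + d5*t^5 + 0*t^6)) = 0 := by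
    refine Eq.trans (intervalIntegral.integral_congr fun t _ => ?_) hu0
    simp only [he]
    push_cast
    try ring
  have Ehv0 : (∫ t in (((0:ℤ):ℝ)-1/2)..(((0:ℤ):ℝ)+1/2), (0 + d0*t + d1*t^2 + d2*t^3 + d3*t^4 + d4*t^5 + d5*t^6)) = 0 := by
    refine Eq.trans (intervalIntegral.integral_congr fun t _ => ?_) hv0
    simp only [he]
    push_cast
    try ring
  have Ehup : (∫ t in (((1:ℤ):ℝ)-1/2)..(((1:ℤ):ℝ)+1/2), (d0 + d1*t + d2*t^2 + d3*t^3 + d4*t^4 + d5*t^5 + 0*t^6)) = 0 := by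
    refine Eq.trans (intervalIntegral.integral_congr fun t _ => ?_) hup
    simp only [he]
    push_cast
    try ring
  have Ehvp : (∫ t in (((1:ℤ):ℝ)-1/2)..(((1:ℤ):ℝ)+1/2), ((-d0) + (d0 - d1)*t + (d1 - d2)*t^2 + (d2 - d3)*t^3 + (d3 - d4)*t^4 + (d4 - d5)*t^5 + (d5)*t^6)) = 0 := by
    refine Eq.trans (intervalIntegral.integral_congr fun t _ => ?_) hvp
    simp only [he]
    push_cast
    try ring
  rw [hwq_poly_int] at Ehum Ehvm Ehu0 Ehv0 Ehup Ehvp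
  push_cast at Ehum Ehvm Ehu0 Ehv0 Ehup Ehvp
  have h0 : d0 = 0 := by
    linear_combination (-43/384) * Ehum + (-27/64) * Ehvm + (235/192) * Ehu0 + (-43/384) * Ehup + (27/64) * Ehvp
  have h1 : d1 = 0 := by
    linear_combination (167/576) * Ehum + (281/288) * Ehvm + (2449/144) * Ehv0 + (-167/576) * Ehup + (281/288) * Ehvp
  have h2 : d2 = 0 := by
    linear_combination (23/16) * Ehum + (45/8) * Ehvm + (-23/8) * Ehu0 + (23/16) * Ehup + (-45/8) * Ehvp
  have h3 : d3 = 0 := by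
    linear_combination (-455/216) * Ehum + (-785/108) * Ehvm + (-1945/54) * Ehv0 + (455/216) * Ehup + (-785/108) * Ehvp
  have h4 : d4 = 0 := by
    linear_combination (-5/8) * Ehum + (-15/4) * Ehvm + (5/4) * Ehu0 + (-5/8) * Ehup + (15/4) * Ehvp
  have h5 : d5 = 0 := by
    linear_combination (35/36) * Ehum + (77/18) * Ehvm + (133/9) * Ehv0 + (-35/36) * Ehup + (77/18) * Ehvp
  ext n
  simp only [Polynomial.coeff_zero]
  by_cases hn : n < 6
  · interval_cases n <;> assumption
  · exact Polynomial.coeff_eq_zero_of_natDegree_lt (by omega)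

lemma hwq_int_sub1 (Q P : Polynomial ℝ) (a b : ℝ) :
    (∫ t in a..b, (Q-P).eval t) = (∫ t in a..b, Q.eval t) - ∫ t in a..b, P.eval t := by
  rw [← intervalIntegral.integral_sub (Q.continuous.intervalIntegrable a b)
    (P.continuous.intervalIntegrable a b)]
  apply intervalIntegral.integral_congr
  intro t _
  simp

lemma hwq_int_sub2 (Q P : Polynomial ℝ) (a b c : ℝ) :
    (∫ t in a..b, (Q-P).eval t * (t - c))
      = (∫ t in a..b, Q.eval t * (t - c)) - ∫ t in a..b, P.eval t * (t - c) := by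
  rw [← intervalIntegral.integral_sub (f := fun t => Q.eval t * (t - c)) (g := fun t => P.eval t * (t - c))
    ((Q.continuous.mul (by continuity)).intervalIntegrable a b)
    ((P.continuous.mul (by continuity)).intervalIntegrable a b)]
  apply intervalIntegral.integral_congr
  intro t _
  simp
  ring

lemma hwq_reduced (u v : ℤ → ℝ) :
    ∃! P : Polynomial ℝ, P.degree ≤ 5 ∧ ∀ l : ℤ, l = -1 ∨ l = 0 ∨ l = 1 →
      ((∫ t in ((l:ℝ)-1/2)..((l:ℝ)+1/2), P.eval t) = u l ∧
       (∫ t in ((l:ℝ)-1/2)..((l:ℝ)+1/2), P.eval t * (t - (l:ℝ))) = v l) := by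
  obtain ⟨P, hdeg, hcond⟩ := hwq_exists u v
  refine ⟨P, ⟨hdeg, hcond⟩, ?_⟩
  rintro Q ⟨hQdeg, hQcond⟩
  have hm := hQcond (-1) (Or.inl rfl)
  have h0 := hQcond 0 (Or.inr (Or.inl rfl))
  have hp := hQcond 1 (Or.inr (Or.inr rfl))
  have hm' := hcond (-1) (Or.inl rfl)
  have h0' := hcond 0 (Or.inr (Or.inl rfl))
  have hp' := hcond 1 (Or.inr (Or.inr rfl))
  have hsub : Q - P = 0 := by
    apply hwq_zero _ ((Polynomial.degree_sub_le _ _).trans (max_le hQdeg hdeg))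
    · rw [hwq_int_sub1, hm.1, hm'.1, sub_self]
    · rw [hwq_int_sub2, hm.2, hm'.2, sub_self]
    · rw [hwq_int_sub1, h0.1, h0'.1, sub_self]
    · rw [hwq_int_sub2, h0.2, h0'.2, sub_self]
    · rw [hwq_int_sub1, hp.1, hp'.1, sub_self]
    · rw [hwq_int_sub2, hp.2, hp'.2, sub_self]
  exact sub_eq_zero.mp hsub

/-- Interpolation on the big stencil `S = {I_{j-1}, I_j, I_{j+1}}`: given the cell
averages `ū_{j-1}, ū_j, ū_{j+1}` and first moments `v̄_{j-1}, v̄_j, v̄_{j+1}`, there is a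
unique polynomial of degree at most 5 matching all six conditions. -/
theorem stmt_9 (Δx xj : ℝ) (hΔx : 0 < Δx)
    (ubar : ℤ → ℝ) (vbar : ℤ → ℝ) :
    ∃! Q : Polynomial ℝ,
      Q.degree ≤ 5 ∧
      ∀ l : ℤ, l = -1 ∨ l = 0 ∨ l = 1 →
        ((1 / Δx) * ∫ x in Set.Ioo (xj + l * Δx - Δx / 2) (xj + l * Δx + Δx / 2),
            Q.eval x) = ubar l ∧
        ((1 / Δx) * ∫ x in Set.Ioo (xj + l * Δx - Δx / 2) (xj + l * Δx + Δx / 2),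
            Q.eval x * ((x - (xj + l * Δx)) / Δx)) = vbar l := by
  have hne : Δx ≠ 0 := hΔx.ne'
  set g : Polynomial ℝ := Polynomial.C Δx⁻¹ * Polynomial.X + Polynomial.C (-(xj/Δx)) with hg
  set h : Polynomial ℝ := Polynomial.C Δx * Polynomial.X + Polynomial.C xj with hh
  have hgh : g.comp h = Polynomial.X := by
    apply Polynomial.funext
    intro x
    simp [hg, hh, Polynomial.eval_comp]
    field_simp
    ring
  have hhg : h.comp g = Polynomial.X := by
    apply Polynomial.funext
    intro x
    simp [hg, hh, Polynomial.eval_comp]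
    field_simp
    ring
  have hdg : g.natDegree = 1 := Polynomial.natDegree_linear (inv_ne_zero hne)
  have hdh : h.natDegree = 1 := Polynomial.natDegree_linear hne
  have heh : ∀ t : ℝ, h.eval t = Δx * t + xj := by
    intro t; simp [hh]
  obtain ⟨P, ⟨hPdeg, hPcond⟩, hPuniq⟩ := hwq_reduced ubar vbar
  have hconds : ∀ (Q : Polynomial ℝ) (l : ℤ), l = -1 ∨ l = 0 ∨ l = 1 →
      (((1 / Δx) * ∫ x in Set.Ioo (xj + l * Δx - Δx / 2) (xj + l * Δx + Δx / 2), Q.eval x)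
        = ∫ t in ((l:ℝ)-1/2)..((l:ℝ)+1/2), (Q.comp h).eval t) ∧
      (((1 / Δx) * ∫ x in Set.Ioo (xj + l * Δx - Δx / 2) (xj + l * Δx + Δx / 2),
          Q.eval x * ((x - (xj + l * Δx)) / Δx))
        = ∫ t in ((l:ℝ)-1/2)..((l:ℝ)+1/2), (Q.comp h).eval t * (t - (l:ℝ))) := by
    intro Q l _
    constructor
    · rw [hwq_change Δx xj hΔx (fun x => Q.eval x) l]
      apply intervalIntegral.integral_congr
      intro t _
      simp [Polynomial.eval_comp, heh]
    · rw [hwq_change Δx xj hΔx (fun x => Q.eval x * ((x - (xj + l * Δx)) / Δx)) l]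
      apply intervalIntegral.integral_congr
      intro t _
      simp only [Polynomial.eval_comp, heh]
      have : (Δx * t + xj - (xj + l * Δx)) / Δx = t - l := by
        field_simp
        ring
      rw [this]
  refine ⟨P.comp g, ⟨?_, ?_⟩, ?_⟩
  · have h1 : (P.comp g).natDegree ≤ 5 := by
      rw [Polynomial.natDegree_comp, hdg, mul_one]
      exact Polynomial.natDegree_le_iff_degree_le.mpr hPdeg
    exact Polynomial.natDegree_le_iff_degree_le.mp h1
  · intro l hl
    have hcomp : (P.comp g).comp h = P := by
      rw [Polynomial.comp_assoc, hgh, Polynomial.comp_X]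
    have hc := hconds (P.comp g) l hl
    constructor
    · rw [hc.1, hcomp]
      exact (hPcond l hl).1
    · rw [hc.2, hcomp]
      exact (hPcond l hl).2
  · rintro Q ⟨hQdeg, hQcond⟩
    have hQP : Q.comp h = P := by
      apply hPuniq
      constructor
      · have h1 : (Q.comp h).natDegree ≤ 5 := by
          rw [Polynomial.natDegree_comp, hdh, mul_one]
          exact Polynomial.natDegree_le_iff_degree_le.mpr hQdeg
        exact Polynomial.natDegree_le_iff_degree_le.mp h1
      · intro l hl
        have hc := hconds Q l hl
        exact ⟨hc.1.symm.trans (hQcond l hl).1, hc.2.symm.trans (hQcond l hl).2⟩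
    calc Q = (Q.comp h).comp g := by rw [Polynomial.comp_assoc, hhg, Polynomial.comp_X]
      _ = P.comp g := by rw [hQP]
end

section
/- Let Δx, Δy > 0, (x_i, y_j) ∈ ℝ², and let I_{ij} = (x_i − Δx/2, x_i + Δx/2) × (y_j − Δy/2, y_j + Δy/2). Let u, H₁, H₂ : ℝ² × ℝ → ℝ be C¹ functions satisfying u_t + (H₁)_x + (H₂)_y = 0 everywhere. Then the mixed moment Z̄_{ij}(t) = (1/(ΔxΔy))·∬_{I_{ij}} u(x,y,t)·((x − x_i)/Δx)·((y − y_j)/Δy) dx dy is differentiable in t and satisfies the exact evolution equation: dZ̄_{ij}/dt = −(1/(2ΔxΔy))·∫_{y_{j−1/2}}^{y_{j+1/2}} [H₁(x_{i+1/2}, y, t) + H₁(x_{i−1/2}, y, t)]·(y − y_j)/Δy dy − (1/(2ΔxΔy))·∫_{x_{i−1/2}}^{x_{i+1/2}} [H₂(x, y_{j+1/2}, t) + H₂(x, y_{j−1/2}, t)]·(x − x_i)/Δx dx + (1/(Δx²Δy))·∬_{I_{ij}} H₁·(y − y_j)/Δy dx dy + (1/(ΔxΔy²))·∬_{I_{ij}}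 H₂·(x − x_i)/Δx dx dy, where x_{i±1/2} = x_i ± Δx/2 and y_{j±1/2} = y_j ± Δy/2. -/
open MeasureTheory Set

private lemma hasDerivAt_c1 {f : ℝ × ℝ × ℝ → ℝ} (hf : ContDiff ℝ 1 f) (x y t : ℝ) :
    HasDerivAt (fun s => f (s, y, t)) (fderiv ℝ f (x, y, t) (1, 0, 0)) x :=
  ((hf.differentiable one_ne_zero (x, y, t)).hasFDerivAt).comp_hasDerivAt x
    (HasDerivAt.prodMk (hasDerivAt_id x) (HasDerivAt.prodMk (hasDerivAt_const x y) (hasDerivAt_const x t)))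

private lemma hasDerivAt_c2 {f : ℝ × ℝ × ℝ → ℝ} (hf : ContDiff ℝ 1 f) (x y t : ℝ) :
    HasDerivAt (fun s => f (x, s, t)) (fderiv ℝ f (x, y, t) (0, 1, 0)) y :=
  ((hf.differentiable one_ne_zero (x, y, t)).hasFDerivAt).comp_hasDerivAt y
    (HasDerivAt.prodMk (hasDerivAt_const y x) (HasDerivAt.prodMk (hasDerivAt_id y) (hasDerivAt_const y t)))

private lemma hasDerivAt_c3 {f : ℝ × ℝ × ℝ → ℝ} (hf : ContDiff ℝ 1 f) (x y t : ℝ) :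
    HasDerivAt (fun s => f (x, y, s)) (fderiv ℝ f (x, y, t) (0, 0, 1)) t :=
  ((hf.differentiable one_ne_zero (x, y, t)).hasFDerivAt).comp_hasDerivAt t
    (HasDerivAt.prodMk (hasDerivAt_const t x) (HasDerivAt.prodMk (hasDerivAt_const t y) (hasDerivAt_id t)))

set_option maxHeartbeats 1000000 in
/-- Exact evolution of the mixed first moment for a 2D conservation law: if
`u_t + (H₁)_x + (H₂)_y = 0` with `u, H₁, H₂` of class `C¹`, then the mixed moment
`Z̄_{ij}(t) = (1/(ΔxΔy)) ∬_{I_{ij}} u ((x - x_i)/Δx)((y - y_j)/Δy) dx dy` is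
differentiable in `t` and satisfies the exact evolution equation obtained by multiplying
the conservation law by `((x - x_i)/Δx)((y - y_j)/Δy)` and integrating by parts. -/
theorem stmt_14 (Δx Δy xi yj : ℝ) (hΔx : 0 < Δx) (hΔy : 0 < Δy)
    (u H₁ H₂ : ℝ × ℝ × ℝ → ℝ)
    (hu : ContDiff ℝ 1 u) (hH₁ : ContDiff ℝ 1 H₁) (hH₂ : ContDiff ℝ 1 H₂)
    (hlaw : ∀ x y t : ℝ,
      deriv (fun τ : ℝ => u (x, y, τ)) t
        + deriv (fun ξ : ℝ => H₁ (ξ, y, t)) x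
        + deriv (fun η : ℝ => H₂ (x, η, t)) y = 0) :
    ∀ t : ℝ,
      HasDerivAt
        (fun τ : ℝ => (1 / (Δx * Δy)) *
          ∫ p in Set.Ioo (xi - Δx / 2) (xi + Δx / 2) ×ˢ Set.Ioo (yj - Δy / 2) (yj + Δy / 2),
            u (p.1, p.2, τ) * ((p.1 - xi) / Δx) * ((p.2 - yj) / Δy))
        (-(1 / (2 * Δx * Δy)) *
            (∫ y in Set.Ioo (yj - Δy / 2) (yj + Δy / 2),
              (H₁ (xi + Δx / 2, y, t) + H₁ (xi - Δx / 2, y, t)) * ((y - yj) / Δy))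
          - (1 / (2 * Δx * Δy)) *
            (∫ x in Set.Ioo (xi - Δx / 2) (xi + Δx / 2),
              (H₂ (x, yj + Δy / 2, t) + H₂ (x, yj - Δy / 2, t)) * ((x - xi) / Δx))
          + (1 / (Δx ^ 2 * Δy)) *
            (∫ p in Set.Ioo (xi - Δx / 2) (xi + Δx / 2) ×ˢ Set.Ioo (yj - Δy / 2) (yj + Δy / 2),
              H₁ (p.1, p.2, t) * ((p.2 - yj) / Δy))
          + (1 / (Δx * Δy ^ 2)) *
            (∫ p in Set.Ioo (xi - Δx / 2) (xi + Δx / 2) ×ˢ Set.Ioo (yj - Δy / 2) (yj + Δy / 2),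
              H₂ (p.1, p.2, t) * ((p.1 - xi) / Δx))) t := by
  intro t
  have hΔx0 : Δx ≠ 0 := ne_of_gt hΔx
  have hΔy0 : Δy ≠ 0 := ne_of_gt hΔy
  set a := xi - Δx / 2 with ha
  set b := xi + Δx / 2 with hb
  set c := yj - Δy / 2 with hc
  set d := yj + Δy / 2 with hd
  have hab : a ≤ b := by rw [ha, hb]; linarith
  have hcd : c ≤ d := by rw [hc, hd]; linarith
  set S : Set (ℝ × ℝ) := Ioo a b ×ˢ Ioo c d with hSdef
  set ut : ℝ × ℝ × ℝ → ℝ := fun p => fderiv ℝ u p (0, 0, 1) with hut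
  set h1x : ℝ × ℝ × ℝ → ℝ := fun p => fderiv ℝ H₁ p (1, 0, 0) with hh1x
  set h2y : ℝ × ℝ × ℝ → ℝ := fun p => fderiv ℝ H₂ p (0, 1, 0) with hh2y
  have hut_cont : Continuous ut := (hu.continuous_fderiv one_ne_zero).clm_apply continuous_const
  have hh1x_cont : Continuous h1x := (hH₁.continuous_fderiv one_ne_zero).clm_apply continuous_const
  have hh2y_cont : Continuous h2y := (hH₂.continuous_fderiv one_ne_zero).clm_apply continuous_const
  have hemb : ∀ τ : ℝ, Continuous (fun p : ℝ × ℝ => (p.1, p.2, τ)) := fun τ =>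
    continuous_fst.prodMk (continuous_snd.prodMk continuous_const)
  have hφ1 : Continuous (fun p : ℝ × ℝ => (p.1 - xi) / Δx) := by fun_prop
  have hφ2 : Continuous (fun p : ℝ × ℝ => (p.2 - yj) / Δy) := by fun_prop
  have hSmeas : MeasurableSet S := measurableSet_Ioo.prod measurableSet_Ioo
  have hSsub : S ⊆ Icc a b ×ˢ Icc c d := Set.prod_mono Ioo_subset_Icc_self Ioo_subset_Icc_self
  have hKcpt : IsCompact (Icc a b ×ˢ Icc c d) := isCompact_Icc.prod isCompact_Icc
  have hint : ∀ g : ℝ × ℝ → ℝ, Continuous g → IntegrableOn g S := fun g hg =>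
    (hg.continuousOn.integrableOn_compact hKcpt).mono_set hSsub
  have hSfin : volume S < ⊤ := lt_of_le_of_lt (measure_mono hSsub) hKcpt.measure_lt_top
  -- bound for dominated differentiation
  have hGc : Continuous (fun z : (ℝ × ℝ) × ℝ =>
      ut (z.1.1, z.1.2, z.2) * ((z.1.1 - xi) / Δx) * ((z.1.2 - yj) / Δy)) :=
    ((hut_cont.comp (by fun_prop)).mul (by fun_prop)).mul (by fun_prop)
  obtain ⟨C, hC⟩ := ((hKcpt.prod (isCompact_Icc (a := t - 1) (b := t + 1)))).exists_bound_of_continuousOn hGc.continuousOn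
  have hA := hasDerivAt_integral_of_dominated_loc_of_deriv_le (μ := volume.restrict S)
    (F := fun τ (p : ℝ × ℝ) => u (p.1, p.2, τ) * ((p.1 - xi) / Δx) * ((p.2 - yj) / Δy))
    (F' := fun τ (p : ℝ × ℝ) => ut (p.1, p.2, τ) * ((p.1 - xi) / Δx) * ((p.2 - yj) / Δy))
    (x₀ := t) (bound := fun _ => C) (s := Metric.ball t 1) (Metric.ball_mem_nhds t one_pos)
    (Filter.Eventually.of_forall fun τ =>
      (((hu.continuous.comp (hemb τ)).mul hφ1).mul hφ2).aestronglyMeasurable)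
    (hint _ (((hu.continuous.comp (hemb t)).mul hφ1).mul hφ2))
    ((((hut_cont.comp (hemb t)).mul hφ1).mul hφ2).aestronglyMeasurable)
    ((ae_restrict_mem hSmeas).mono (fun p hp τ hτ => by
      have hmem : ((p, τ) : (ℝ × ℝ) × ℝ) ∈ (Icc a b ×ˢ Icc c d) ×ˢ Icc (t - 1) (t + 1) := by
        refine ⟨hSsub hp, ?_⟩
        rw [Metric.mem_ball, Real.dist_eq] at hτ
        obtain ⟨h1, h2⟩ := abs_lt.mp hτ
        exact ⟨by linarith, by linarith⟩
      exact hC (p, τ) hmem))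
    (integrableOn_const hSfin.ne)
    (Filter.Eventually.of_forall fun p τ _ => by
      have := ((hasDerivAt_c3 hu p.1 p.2 τ).mul_const ((p.1 - xi) / Δx)).mul_const ((p.2 - yj) / Δy)
      simpa [hut] using this)
  have hD : HasDerivAt
      (fun τ : ℝ => (1 / (Δx * Δy)) *
        ∫ p in S, u (p.1, p.2, τ) * ((p.1 - xi) / Δx) * ((p.2 - yj) / Δy))
      ((1 / (Δx * Δy)) *
        ∫ p in S, ut (p.1, p.2, t) * ((p.1 - xi) / Δx) * ((p.2 - yj) / Δy)) t :=
    hA.2.const_mul _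
  convert hD using 1
  -- now prove the value equality
  have hmeasprod : ((volume : Measure ℝ).restrict (Ioo a b)).prod
      ((volume : Measure ℝ).restrict (Ioo c d)) = (volume : Measure (ℝ × ℝ)).restrict S := by
    rw [Measure.prod_restrict, ← Measure.volume_eq_prod]
  -- pointwise conservation law
  have hlaw' : ∀ x y s : ℝ, ut (x, y, s) = -h1x (x, y, s) - h2y (x, y, s) := by
    intro x y s
    have h := hlaw x y s
    rw [(hasDerivAt_c3 hu x y s).deriv, (hasDerivAt_c1 hH₁ x y s).deriv,
      (hasDerivAt_c2 hH₂ x y s).deriv] at h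
    simp only [hut, hh1x, hh2y]
    linarith
  -- integration by parts in x, summed identity
  have hinner1 : ∀ y : ℝ,
      (∫ x in Ioo a b, (h1x (x, y, t) * ((x - xi) / Δx) * ((y - yj) / Δy)
        + (1 / Δx) * (H₁ (x, y, t) * ((y - yj) / Δy))))
      = (1 / 2) * ((H₁ (b, y, t) + H₁ (a, y, t)) * ((y - yj) / Δy)) := by
    intro y
    rw [← integral_Ioc_eq_integral_Ioo, ← intervalIntegral.integral_of_le hab]
    have h1 : ∀ x ∈ Set.uIcc a b, HasDerivAt (fun s => H₁ (s, y, t)) (h1x (x, y, t)) x :=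
      fun x _ => by simpa [hh1x] using hasDerivAt_c1 hH₁ x y t
    have h2 : ∀ x ∈ Set.uIcc a b, HasDerivAt (fun s : ℝ => ((s - xi) / Δx) * ((y - yj) / Δy))
        ((1 / Δx) * ((y - yj) / Δy)) x := fun x _ => by
      have := (((hasDerivAt_id x).sub_const xi).div_const Δx).mul_const ((y - yj) / Δy)
      simpa [one_div] using this
    have h3 : IntervalIntegrable (fun x => h1x (x, y, t)) volume a b :=
      (hh1x_cont.comp (by fun_prop)).intervalIntegrable a b
    have h4 : IntervalIntegrable (fun _ : ℝ => (1 / Δx) * ((y - yj) / Δy)) volume a b :=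
      intervalIntegrable_const
    have hIBP := intervalIntegral.integral_deriv_mul_eq_sub h1 h2 h3 h4
    rw [intervalIntegral.integral_congr
      (g := fun x => h1x (x, y, t) * (((x - xi) / Δx) * ((y - yj) / Δy))
        + H₁ (x, y, t) * ((1 / Δx) * ((y - yj) / Δy))) (fun x _ => by ring), hIBP, ha, hb]
    field_simp
    ring
  have hW1 : (∫ p in S, (h1x (p.1, p.2, t) * ((p.1 - xi) / Δx) * ((p.2 - yj) / Δy)
        + (1 / Δx) * (H₁ (p.1, p.2, t) * ((p.2 - yj) / Δy))))
      = (1 / 2) * ∫ y in Ioo c d, (H₁ (b, y, t) + H₁ (a, y, t)) * ((y - yj) / Δy) := by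
    have hI : Integrable (fun p : ℝ × ℝ => h1x (p.1, p.2, t) * ((p.1 - xi) / Δx) * ((p.2 - yj) / Δy)
        + (1 / Δx) * (H₁ (p.1, p.2, t) * ((p.2 - yj) / Δy)))
        (((volume : Measure ℝ).restrict (Ioo a b)).prod ((volume : Measure ℝ).restrict (Ioo c d))) := by
      rw [hmeasprod]
      exact hint _ ((((hh1x_cont.comp (hemb t)).mul hφ1).mul hφ2).add
        (continuous_const.mul ((hH₁.continuous.comp (hemb t)).mul hφ2)))
    rw [← hmeasprod, integral_prod_symm _ hI]
    simp only [hinner1]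
    rw [integral_const_mul]
  -- integration by parts in y, summed identity
  have hinner2 : ∀ x : ℝ,
      (∫ y in Ioo c d, (h2y (x, y, t) * ((x - xi) / Δx) * ((y - yj) / Δy)
        + (1 / Δy) * (H₂ (x, y, t) * ((x - xi) / Δx))))
      = (1 / 2) * ((H₂ (x, d, t) + H₂ (x, c, t)) * ((x - xi) / Δx)) := by
    intro x
    rw [← integral_Ioc_eq_integral_Ioo, ← intervalIntegral.integral_of_le hcd]
    have h1 : ∀ y ∈ Set.uIcc c d, HasDerivAt (fun s => H₂ (x, s, t)) (h2y (x, y, t)) y :=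
      fun y _ => by simpa [hh2y] using hasDerivAt_c2 hH₂ x y t
    have h2 : ∀ y ∈ Set.uIcc c d, HasDerivAt (fun s : ℝ => ((x - xi) / Δx) * ((s - yj) / Δy))
        (((x - xi) / Δx) * (1 / Δy)) y := fun y _ => by
      have := (((hasDerivAt_id y).sub_const yj).div_const Δy).const_mul ((x - xi) / Δx)
      simpa [one_div] using this
    have h3 : IntervalIntegrable (fun y => h2y (x, y, t)) volume c d :=
      (hh2y_cont.comp (by fun_prop)).intervalIntegrable c d
    have h4 : IntervalIntegrable (fun _ : ℝ => ((x - xi) / Δx) * (1 / Δy)) volume c d :=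
      intervalIntegrable_const
    have hIBP := intervalIntegral.integral_deriv_mul_eq_sub h1 h2 h3 h4
    rw [intervalIntegral.integral_congr
      (g := fun y => h2y (x, y, t) * (((x - xi) / Δx) * ((y - yj) / Δy))
        + H₂ (x, y, t) * (((x - xi) / Δx) * (1 / Δy))) (fun y _ => by ring), hIBP, hc, hd]
    field_simp
    ring
  have hW2 : (∫ p in S, (h2y (p.1, p.2, t) * ((p.1 - xi) / Δx) * ((p.2 - yj) / Δy)
        + (1 / Δy) * (H₂ (p.1, p.2, t) * ((p.1 - xi) / Δx))))
      = (1 / 2) * ∫ x in Ioo a b, (H₂ (x, d, t) + H₂ (x, c, t)) * ((x - xi) / Δx) := by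
    have hI : Integrable (fun p : ℝ × ℝ => h2y (p.1, p.2, t) * ((p.1 - xi) / Δx) * ((p.2 - yj) / Δy)
        + (1 / Δy) * (H₂ (p.1, p.2, t) * ((p.1 - xi) / Δx)))
        (((volume : Measure ℝ).restrict (Ioo a b)).prod ((volume : Measure ℝ).restrict (Ioo c d))) := by
      rw [hmeasprod]
      exact hint _ ((((hh2y_cont.comp (hemb t)).mul hφ1).mul hφ2).add
        (continuous_const.mul ((hH₂.continuous.comp (hemb t)).mul hφ1)))
    rw [← hmeasprod, integral_prod _ hI]
    simp only [hinner2]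
    rw [integral_const_mul]
  -- split into the four pieces
  have hT1 : (∫ p in S, h1x (p.1, p.2, t) * ((p.1 - xi) / Δx) * ((p.2 - yj) / Δy))
      = (1 / 2) * (∫ y in Ioo c d, (H₁ (b, y, t) + H₁ (a, y, t)) * ((y - yj) / Δy))
        - (1 / Δx) * ∫ p in S, H₁ (p.1, p.2, t) * ((p.2 - yj) / Δy) := by
    have hIa : IntegrableOn (fun p : ℝ × ℝ =>
        h1x (p.1, p.2, t) * ((p.1 - xi) / Δx) * ((p.2 - yj) / Δy)) S :=
      hint _ (((hh1x_cont.comp (hemb t)).mul hφ1).mul hφ2)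
    have hIb : IntegrableOn (fun p : ℝ × ℝ =>
        (1 / Δx) * (H₁ (p.1, p.2, t) * ((p.2 - yj) / Δy))) S :=
      hint _ (continuous_const.mul ((hH₁.continuous.comp (hemb t)).mul hφ2))
    have h5 := integral_add hIa hIb
    rw [hW1] at h5
    have h6 : (∫ p in S, (1 / Δx) * (H₁ (p.1, p.2, t) * ((p.2 - yj) / Δy)))
        = (1 / Δx) * ∫ p in S, H₁ (p.1, p.2, t) * ((p.2 - yj) / Δy) :=
      integral_const_mul _ _
    rw [h6] at h5
    linarith
  have hT2 : (∫ p in S, h2y (p.1, p.2, t) * ((p.1 - xi) / Δx) * ((p.2 - yj) / Δy))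
      = (1 / 2) * (∫ x in Ioo a b, (H₂ (x, d, t) + H₂ (x, c, t)) * ((x - xi) / Δx))
        - (1 / Δy) * ∫ p in S, H₂ (p.1, p.2, t) * ((p.1 - xi) / Δx) := by
    have hIa : IntegrableOn (fun p : ℝ × ℝ =>
        h2y (p.1, p.2, t) * ((p.1 - xi) / Δx) * ((p.2 - yj) / Δy)) S :=
      hint _ (((hh2y_cont.comp (hemb t)).mul hφ1).mul hφ2)
    have hIb : IntegrableOn (fun p : ℝ × ℝ =>
        (1 / Δy) * (H₂ (p.1, p.2, t) * ((p.1 - xi) / Δx))) S :=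
      hint _ (continuous_const.mul ((hH₂.continuous.comp (hemb t)).mul hφ1))
    have h5 := integral_add hIa hIb
    rw [hW2] at h5
    have h6 : (∫ p in S, (1 / Δy) * (H₂ (p.1, p.2, t) * ((p.1 - xi) / Δx)))
        = (1 / Δy) * ∫ p in S, H₂ (p.1, p.2, t) * ((p.1 - xi) / Δx) :=
      integral_const_mul _ _
    rw [h6] at h5
    linarith
  have hT0 : (∫ p in S, ut (p.1, p.2, t) * ((p.1 - xi) / Δx) * ((p.2 - yj) / Δy))
      = -(∫ p in S, h1x (p.1, p.2, t) * ((p.1 - xi) / Δx) * ((p.2 - yj) / Δy))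
        - (∫ p in S, h2y (p.1, p.2, t) * ((p.1 - xi) / Δx) * ((p.2 - yj) / Δy)) := by
    have hfe : (fun p : ℝ × ℝ => ut (p.1, p.2, t) * ((p.1 - xi) / Δx) * ((p.2 - yj) / Δy))
        = fun p : ℝ × ℝ => (-(h1x (p.1, p.2, t) * ((p.1 - xi) / Δx) * ((p.2 - yj) / Δy)))
          - h2y (p.1, p.2, t) * ((p.1 - xi) / Δx) * ((p.2 - yj) / Δy) :=
      funext fun p => by rw [hlaw' p.1 p.2 t]; ring
    have hIa : IntegrableOn (fun p : ℝ × ℝ =>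
        -(h1x (p.1, p.2, t) * ((p.1 - xi) / Δx) * ((p.2 - yj) / Δy))) S :=
      (hint _ (((hh1x_cont.comp (hemb t)).mul hφ1).mul hφ2)).neg
    have hIb : IntegrableOn (fun p : ℝ × ℝ =>
        h2y (p.1, p.2, t) * ((p.1 - xi) / Δx) * ((p.2 - yj) / Δy)) S :=
      hint _ (((hh2y_cont.comp (hemb t)).mul hφ1).mul hφ2)
    rw [hfe, integral_sub hIa hIb, integral_neg]
  rw [hT0, hT1, hT2]
  field_simp
  ring
end
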